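/- arXiv:1104.1906 — 2 statements merged into one kernel-verified Lean document; each statement's English description precedes it below -/
import Mathlib

section
/- For any system G of integer-coefficient polynomials, the function (m_1,…,m_r) ↦ E_G(m_1,…,m_r) := (1/lcm(m_1,…,m_r))·Σ_{k=1}^{lcm(m_1,…,m_r)} c_{m_1}(g_1(k))···c_{m_r}(g_r(k)) is multiplicative, i.e., E_G(m_1 n_1,…,m_r n_r) = E_G(m_1,…,m_r)·E_G(n_1,…,n_r) whenever gcd(m_1···m_r, n_1···n_r) = 1. -/
open Finset ArithmeticFunction
open scoped ArithmeticFunction.Moebius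

/-- The Ramanujan sum `c_n(k) = ∑_{d ∣ gcd(k,n)} d · μ(n/d)`, for integer `k`. -/
def ramanujanSum (n : ℕ) (k : ℤ) : ℤ :=
  ∑ d ∈ (Int.gcd k n).divisors, (d : ℤ) * ArithmeticFunction.moebius (n / d)

/-- `E_G(m₁,…,m_r) = (1/lcm(m₁,…,m_r)) ∑_{k=1}^{lcm} ∏ᵢ c_{mᵢ}(gᵢ(k))`. -/
def EG {r : ℕ} (g : Fin r → Polynomial ℤ) (m : Fin r → ℕ) : ℚ :=
  (1 / ((Finset.univ.lcm m : ℕ) : ℚ)) *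
    ∑ k ∈ Icc 1 (Finset.univ.lcm m),
      ∏ i, (ramanujanSum (m i) ((g i).eval (k : ℤ)) : ℚ)

/-- The indicator-weighted divisor function `d ↦ d·[d ∣ k]` as an arithmetic function. -/
def divInd (k : ℤ) : ArithmeticFunction ℤ :=
  ⟨fun d => if (d : ℤ) ∣ k then d else 0, by simp⟩

lemma divInd_apply (k : ℤ) (d : ℕ) : divInd k d = if (d : ℤ) ∣ k then (d : ℤ) else 0 := rfl

lemma divInd_isMultiplicative (k : ℤ) : (divInd k).IsMultiplicative := by
  constructor
  · simp [divInd_apply]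
  · intro a b hab
    have hiff : ((a : ℤ) * b ∣ k) ↔ ((a : ℤ) ∣ k ∧ (b : ℤ) ∣ k) := by
      constructor
      · intro hd; exact ⟨(dvd_mul_right _ _).trans hd, (dvd_mul_left _ _).trans hd⟩
      · rintro ⟨h1, h2⟩
        refine IsCoprime.mul_dvd ?_ h1 h2
        rw [Int.isCoprime_iff_gcd_eq_one]
        simpa [Int.gcd_natCast_natCast] using hab
    simp only [divInd_apply, Nat.cast_mul]
    by_cases h1 : (a : ℤ) ∣ k <;> by_cases h2 : (b : ℤ) ∣ k <;>
      simp [h1, h2, hiff]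

lemma ramanujanSum_eq_conv (k : ℤ) {n : ℕ} (hn : n ≠ 0) :
    ramanujanSum n k = (divInd k * μ) n := by
  rw [ArithmeticFunction.mul_apply, Nat.sum_divisorsAntidiagonal (fun d e => divInd k d * μ e)]
  rw [ramanujanSum]
  have hset : (Int.gcd k n).divisors = n.divisors.filter (fun d : ℕ => (d : ℤ) ∣ k) := by
    ext d
    simp only [Nat.mem_divisors, Finset.mem_filter, Int.gcd]
    constructor
    · rintro ⟨hd, -⟩
      exact ⟨⟨(Nat.dvd_gcd_iff.mp hd).2, hn⟩, Int.natCast_dvd.mpr (Nat.dvd_gcd_iff.mp hd).1⟩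
    · rintro ⟨⟨hd, -⟩, hk⟩
      exact ⟨Nat.dvd_gcd (Int.natCast_dvd.mp hk) hd,
        fun h0 => hn (Nat.eq_zero_of_gcd_eq_zero_right h0)⟩
  rw [hset, Finset.sum_filter]
  refine Finset.sum_congr rfl fun d hd => ?_
  by_cases h : (d : ℤ) ∣ k <;> simp [h, divInd_apply]

lemma ramanujanSum_mul (k : ℤ) {a b : ℕ} (ha : a ≠ 0) (hb : b ≠ 0) (hab : Nat.Coprime a b) :
    ramanujanSum (a * b) k = ramanujanSum a k * ramanujanSum b k := by
  rw [ramanujanSum_eq_conv k (mul_ne_zero ha hb), ramanujanSum_eq_conv k ha,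
    ramanujanSum_eq_conv k hb]
  exact ((divInd_isMultiplicative k).mul isMultiplicative_moebius).map_mul_of_coprime hab

lemma ramanujanSum_congr {n : ℕ} {a b : ℤ} (hab : a ≡ b [ZMOD n]) :
    ramanujanSum n a = ramanujanSum n b := by
  have hg : Int.gcd a n = Int.gcd b n := by
    have hd : (n : ℤ) ∣ b - a := Int.ModEq.dvd hab
    apply Nat.dvd_antisymm
    · rw [← Int.natCast_dvd_natCast]
      exact Int.dvd_coe_gcd (by
        have h1 : (Int.gcd a n : ℤ) ∣ b - a := (Int.gcd_dvd_right _ _).trans hd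
        have h2 : (Int.gcd a n : ℤ) ∣ a := Int.gcd_dvd_left _ _
        simpa using h1.add h2) (Int.gcd_dvd_right _ _)
    · rw [← Int.natCast_dvd_natCast]
      refine Int.dvd_coe_gcd ?_ (Int.gcd_dvd_right _ _)
      have h1 : (Int.gcd b n : ℤ) ∣ b - a := (Int.gcd_dvd_right _ _).trans hd
      have h2 : (Int.gcd b n : ℤ) ∣ b := Int.gcd_dvd_left _ _
      simpa using h2.sub h1
  rw [ramanujanSum, ramanujanSum, hg]

lemma eval_modEq (p : Polynomial ℤ) {n : ℤ} {a b : ℤ} (hab : a ≡ b [ZMOD n]) :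
    p.eval a ≡ p.eval b [ZMOD n] := by
  induction p using Polynomial.induction_on with
  | C c => simp
  | add p q hp hq => simpa using hp.add hq
  | monomial j c _ => simpa using (Int.ModEq.refl c).mul (hab.pow _)

lemma lcm4 {x y u v : ℕ} (hxy : Nat.Coprime x y) (hxv : Nat.Coprime x v)
    (hyu : Nat.Coprime y u) (huv : Nat.Coprime u v) :
    Nat.lcm (x * y) (u * v) = Nat.lcm x u * Nat.lcm y v := by
  have h1 : Nat.Coprime (Nat.lcm x u) (Nat.lcm y v) := by
    have hxyv : Nat.Coprime x (Nat.lcm y v) :=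
      Nat.Coprime.coprime_dvd_right (Nat.lcm_dvd (dvd_mul_right y v) (dvd_mul_left v y))
        (hxy.mul_right hxv)
    have huyv : Nat.Coprime u (Nat.lcm y v) :=
      Nat.Coprime.coprime_dvd_right (Nat.lcm_dvd (dvd_mul_right y v) (dvd_mul_left v y))
        ((hyu.symm).mul_right huv)
    exact Nat.Coprime.coprime_dvd_left (Nat.lcm_dvd (dvd_mul_right x u) (dvd_mul_left u x))
      (hxyv.mul huyv)
  apply Nat.dvd_antisymm
  · exact Nat.lcm_dvd (mul_dvd_mul (Nat.dvd_lcm_left x u) (Nat.dvd_lcm_left y v))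
      (mul_dvd_mul (Nat.dvd_lcm_right x u) (Nat.dvd_lcm_right y v))
  · refine Nat.Coprime.mul_dvd_of_dvd_of_dvd h1 ?_ ?_
    · exact Nat.lcm_dvd ((dvd_mul_right x y).trans (Nat.dvd_lcm_left _ _))
        ((dvd_mul_right u v).trans (Nat.dvd_lcm_right _ _))
    · exact Nat.lcm_dvd ((dvd_mul_left y x).trans (Nat.dvd_lcm_left _ _))
        ((dvd_mul_left v u).trans (Nat.dvd_lcm_right _ _))

lemma lcm_mul_of_coprime {r : ℕ} (m n : Fin r → ℕ)
    (hc : ∀ i j, Nat.Coprime (m i) (n j)) (s : Finset (Fin r)) :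
    s.lcm (fun i => m i * n i) = s.lcm m * s.lcm n := by
  induction s using Finset.induction_on with
  | empty => simp
  | insert _ _ ha ih =>
    rename_i a s
    rw [Finset.lcm_insert, Finset.lcm_insert, Finset.lcm_insert, ih]
    have hdn : s.lcm n ∣ ∏ j ∈ s, n j := Finset.lcm_dvd fun j hj => Finset.dvd_prod_of_mem n hj
    have hdm : s.lcm m ∣ ∏ j ∈ s, m j := Finset.lcm_dvd fun j hj => Finset.dvd_prod_of_mem m hj
    have h1 : Nat.Coprime (m a) (s.lcm n) :=
      Nat.Coprime.coprime_dvd_right hdn (Nat.Coprime.prod_right fun j _ => hc a j)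
    have h2 : Nat.Coprime (n a) (s.lcm m) :=
      Nat.Coprime.coprime_dvd_right hdm (Nat.Coprime.prod_right fun j _ => (hc j a).symm)
    have h3 : Nat.Coprime (s.lcm m) (s.lcm n) :=
      Nat.Coprime.coprime_dvd_left hdm (Nat.Coprime.coprime_dvd_right hdn
        (Nat.Coprime.prod_right fun j _ => Nat.Coprime.prod_left fun i _ => hc i j))
    exact lcm4 (hc a a) h1 h2 h3

lemma sum_Icc_eq_sum_zmod {L : ℕ} [NeZero L] (F : ZMod L → ℚ) :
    ∑ k ∈ Icc 1 L, F (k : ZMod L) = ∑ x : ZMod L, F x := by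
  have hL : 0 < L := Nat.pos_of_ne_zero (NeZero.ne L)
  refine Finset.sum_nbij' (i := fun k => (k : ZMod L))
    (j := fun x => if x.val = 0 then L else x.val) ?_ ?_ ?_ ?_ ?_
  · intro k _; exact Finset.mem_univ _
  · intro x _
    by_cases hx : x.val = 0
    · simp only [hx, if_pos rfl, Finset.mem_Icc]
      exact ⟨hL, le_refl L⟩
    · simp only [hx, if_neg hx, Finset.mem_Icc]
      exact ⟨Nat.pos_of_ne_zero hx, (ZMod.val_lt x).le⟩
  · intro k hk
    rw [Finset.mem_Icc] at hk
    rcases eq_or_lt_of_le hk.2 with h | h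
    · subst h; simp [ZMod.val_natCast, Nat.mod_self]
    · rw [ZMod.val_natCast_of_lt h, if_neg (by omega)]
  · intro x _
    by_cases hx : x.val = 0
    · rw [if_pos hx, ZMod.natCast_self, ← ZMod.natCast_zmod_val x, hx, Nat.cast_zero]
    · rw [if_neg hx, ZMod.natCast_zmod_val]
  · intros; rfl

lemma sum_zmod_mul {M N : ℕ} [NeZero M] [NeZero N] (h : Nat.Coprime M N)
    (F : ZMod M → ℚ) (G : ZMod N → ℚ) :
    ∑ x : ZMod (M * N), F ((x.val : ZMod M)) * G ((x.val : ZMod N)) =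
      (∑ a : ZMod M, F a) * (∑ b : ZMod N, G b) := by
  haveI : NeZero (M * N) := ⟨mul_ne_zero (NeZero.ne M) (NeZero.ne N)⟩
  let e := ZMod.chineseRemainder h
  have he : ∀ x : ZMod (M * N), e x = ((x.val : ZMod M), (x.val : ZMod N)) := by
    intro x
    have : e x = ZMod.castHom
        (show Nat.lcm M N ∣ M * N by simp [Nat.lcm_dvd_iff]) (ZMod M × ZMod N) x := rfl
    rw [this, ZMod.castHom_apply, ← ZMod.natCast_val]
    rfl
  calc ∑ x : ZMod (M * N), F ((x.val : ZMod M)) * G ((x.val : ZMod N))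
      = ∑ x : ZMod (M * N), F (e x).1 * G (e x).2 := by
        refine Finset.sum_congr rfl fun x _ => ?_
        rw [he x]
    _ = ∑ y : ZMod M × ZMod N, F y.1 * G y.2 :=
        Fintype.sum_bijective e.toEquiv e.toEquiv.bijective _ _ (fun x => rfl)
    _ = (∑ a : ZMod M, F a) * (∑ b : ZMod N, G b) := by
        rw [Fintype.sum_prod_type, ← Finset.sum_mul_sum]

theorem EG_multiplicative {r : ℕ} (g : Fin r → Polynomial ℤ)
    (m n : Fin r → ℕ) (hm : ∀ i, 0 < m i) (hn : ∀ i, 0 < n i)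
    (h : Nat.Coprime (∏ i, m i) (∏ i, n i)) :
    EG g (fun i => m i * n i) = EG g m * EG g n := by
  classical
  have hc : ∀ i j, Nat.Coprime (m i) (n j) := fun i j =>
    Nat.Coprime.coprime_dvd_left (Finset.dvd_prod_of_mem m (mem_univ i))
      (Nat.Coprime.coprime_dvd_right (Finset.dvd_prod_of_mem n (mem_univ j)) h)
  set M := Finset.univ.lcm m with hMdef
  set N := Finset.univ.lcm n with hNdef
  have hdM : M ∣ ∏ i, m i := Finset.lcm_dvd fun i _ => Finset.dvd_prod_of_mem m (mem_univ i)
  have hdN : N ∣ ∏ i, n i := Finset.lcm_dvd fun i _ => Finset.dvd_prod_of_mem n (mem_univ i)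
  have hMne : M ≠ 0 := by
    intro h0; rw [h0] at hdM
    exact absurd (Nat.eq_zero_of_zero_dvd hdM) (Finset.prod_pos fun i _ => hm i).ne'
  have hNne : N ≠ 0 := by
    intro h0; rw [h0] at hdN
    exact absurd (Nat.eq_zero_of_zero_dvd hdN) (Finset.prod_pos fun i _ => hn i).ne'
  haveI : NeZero M := ⟨hMne⟩
  haveI : NeZero N := ⟨hNne⟩
  haveI : NeZero (M * N) := ⟨mul_ne_zero hMne hNne⟩
  have hMN : Nat.Coprime M N :=
    Nat.Coprime.coprime_dvd_left hdM (Nat.Coprime.coprime_dvd_right hdN h)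
  have hlcm : Finset.univ.lcm (fun i => m i * n i) = M * N := lcm_mul_of_coprime m n hc _
  set F : ZMod M → ℚ := fun x => ∏ i, (ramanujanSum (m i) ((g i).eval (x.val : ℤ)) : ℚ) with hF
  set G : ZMod N → ℚ := fun x => ∏ i, (ramanujanSum (n i) ((g i).eval (x.val : ℤ)) : ℚ) with hG
  have keycast : ∀ (L : ℕ) (_ : NeZero L) (d : ℕ) (_ : d ∣ L) (k : ℕ) (p : Polynomial ℤ),
      ramanujanSum d (p.eval (((k : ZMod L).val : ℤ))) = ramanujanSum d (p.eval (k : ℤ)) := by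
    intro L _ d hd k p
    apply ramanujanSum_congr
    apply eval_modEq
    have h1 : ((k : ZMod L).val : ℤ) ≡ (k : ℤ) [ZMOD (L : ℤ)] := by
      rw [ZMod.val_natCast]
      show ((((k % L : ℕ)) : ℤ)) % L = (k : ℤ) % L
      push_cast
      exact Int.emod_emod_of_dvd _ dvd_rfl
    exact h1.of_dvd (Int.natCast_dvd_natCast.mpr hd)
  have keyM : ∀ k : ℕ, F (k : ZMod M) = ∏ i, (ramanujanSum (m i) ((g i).eval (k : ℤ)) : ℚ) := by
    intro k
    refine Finset.prod_congr rfl fun i _ => ?_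
    rw [keycast M ‹_› (m i) (Finset.dvd_lcm (mem_univ i)) k (g i)]
  have keyN : ∀ k : ℕ, G (k : ZMod N) = ∏ i, (ramanujanSum (n i) ((g i).eval (k : ℤ)) : ℚ) := by
    intro k
    refine Finset.prod_congr rfl fun i _ => ?_
    rw [keycast N ‹_› (n i) (Finset.dvd_lcm (mem_univ i)) k (g i)]
  have hS : (∑ k ∈ Icc 1 (M * N), ∏ i, (ramanujanSum (m i * n i) ((g i).eval (k : ℤ)) : ℚ))
      = (∑ k ∈ Icc 1 M, ∏ i, (ramanujanSum (m i) ((g i).eval (k : ℤ)) : ℚ)) *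
        (∑ k ∈ Icc 1 N, ∏ i, (ramanujanSum (n i) ((g i).eval (k : ℤ)) : ℚ)) := by
    calc (∑ k ∈ Icc 1 (M * N), ∏ i, (ramanujanSum (m i * n i) ((g i).eval (k : ℤ)) : ℚ))
        = ∑ k ∈ Icc 1 (M * N),
            F (((k : ZMod (M * N))).val : ZMod M) * G (((k : ZMod (M * N))).val : ZMod N) := by
          refine Finset.sum_congr rfl fun k _ => ?_
          have e1 : ((((k : ZMod (M * N))).val : ℕ) : ZMod M) = (k : ZMod M) := by
            rw [ZMod.val_natCast, (ZMod.natCast_eq_natCast_iff _ _ _)]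
            exact Nat.mod_mod_of_dvd k (dvd_mul_right M N)
          have e2 : ((((k : ZMod (M * N))).val : ℕ) : ZMod N) = (k : ZMod N) := by
            rw [ZMod.val_natCast, (ZMod.natCast_eq_natCast_iff _ _ _)]
            exact Nat.mod_mod_of_dvd k (dvd_mul_left N M)
          rw [e1, e2, keyM k, keyN k, ← Finset.prod_mul_distrib]
          refine Finset.prod_congr rfl fun i _ => ?_
          rw [ramanujanSum_mul _ (hm i).ne' (hn i).ne' (hc i i)]
          push_cast
          ring
      _ = ∑ x : ZMod (M * N), F ((x.val : ZMod M)) * G ((x.val : ZMod N)) :=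
          sum_Icc_eq_sum_zmod (fun x => F ((x.val : ZMod M)) * G ((x.val : ZMod N)))
      _ = (∑ a : ZMod M, F a) * (∑ b : ZMod N, G b) := sum_zmod_mul hMN F G
      _ = _ := by
          rw [← sum_Icc_eq_sum_zmod F, ← sum_Icc_eq_sum_zmod G]
          congr 1
          · exact Finset.sum_congr rfl fun k _ => keyM k
          · exact Finset.sum_congr rfl fun k _ => keyN k
  simp only [EG, hlcm, ← hMdef, ← hNdef]
  rw [hS]
  have hMQ : ((M : ℕ) : ℚ) ≠ 0 := Nat.cast_ne_zero.mpr hMne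
  have hNQ : ((N : ℕ) : ℚ) ≠ 0 := Nat.cast_ne_zero.mpr hNne
  push_cast
  field_simp
end

section
/- Write n = 2^j · m with m odd. Then (1/n)·Σ_{k=1}^{n} c_n(k² − 1) equals 1 if j ∈ {0, 2} and m is squarefree, equals 2 if j = 3 and m is squarefree, and equals 0 otherwise. -/
open Finset ArithmeticFunction
open scoped ArithmeticFunction.Moebius

/-- Number of solutions of `k^2 ≡ 1 (mod d)` among `k ∈ [1, d]`. -/
def Nsol (d : ℕ) : ℕ := ((Icc 1 d).filter (fun k => d ∣ k^2 - 1)).card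

lemma Nsol_zero : Nsol 0 = 0 := rfl

lemma Nsol_one : Nsol 1 = 1 := by decide

lemma Nsol_int_iff (d k : ℕ) (hk : 1 ≤ k) : ((d:ℤ) ∣ (k:ℤ)^2 - 1) ↔ d ∣ k^2 - 1 := by
  rw [← Int.natCast_dvd_natCast (n := k^2-1), Nat.cast_sub (by nlinarith : 1 ≤ k^2)]
  push_cast
  rfl

lemma sq_cong (d k r : ℕ) (hk : 1 ≤ k) (hr : 1 ≤ r) (h : k % d = r % d) :
    (d ∣ k^2 - 1 ↔ d ∣ r^2 - 1) := by
  rw [← Nsol_int_iff d k hk, ← Nsol_int_iff d r hr]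
  have hd : (d:ℤ) ∣ (k:ℤ)^2 - (r:ℤ)^2 := by
    have h1 : (d:ℤ) ∣ (r:ℤ) - (k:ℤ) := (Nat.ModEq.dvd h)
    have : ((k:ℤ)^2 - (r:ℤ)^2) = ((r:ℤ) - (k:ℤ)) * (-(k:ℤ) - (r:ℤ)) := by ring
    rw [this]; exact h1.mul_right _
  constructor
  · intro h1
    have h2 := dvd_sub h1 hd
    rw [show (k:ℤ)^2 - 1 - ((k:ℤ)^2 - (r:ℤ)^2) = (r:ℤ)^2 - 1 by ring] at h2
    exact h2
  · intro h1
    have h2 := dvd_add h1 hd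
    rw [show (r:ℤ)^2 - 1 + ((k:ℤ)^2 - (r:ℤ)^2) = (k:ℤ)^2 - 1 by ring] at h2
    exact h2

lemma count_interval (n d : ℕ) (hd : 0 < d) (hdvd : d ∣ n) :
    ((Icc 1 n).filter (fun k => d ∣ k^2 - 1)).card = (n / d) * Nsol d := by
  have hn : n / d * d = n := Nat.div_mul_cancel hdvd
  rw [Nsol, ← Finset.card_range (n/d), ← Finset.card_product]
  apply Finset.card_nbij' (i := fun k => ((k-1)/d, (k-1) % d + 1))
    (j := fun p => p.1 * d + p.2)
  · intro k hk
    simp only [Finset.mem_coe, Finset.mem_filter, Finset.mem_Icc] at hk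
    obtain ⟨⟨hk1, hk2⟩, hk3⟩ := hk
    have hmod := Nat.div_add_mod (k-1) d
    have hmlt : (k-1) % d < d := Nat.mod_lt _ hd
    simp only [Finset.mem_coe, Finset.mem_product, Finset.mem_range, Finset.mem_filter, Finset.mem_Icc]
    refine ⟨?_, ⟨by omega, by omega⟩, ?_⟩
    · rw [Nat.div_lt_iff_lt_mul hd, hn]; omega
    · rw [← sq_cong d k _ hk1 (by omega) ?_]
      · exact hk3
      · have h2 : k = ((k-1) % d + 1) + d * ((k-1)/d) := by omega
        conv_lhs => rw [h2]
        rw [Nat.add_mul_mod_self_left]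
  · rintro ⟨q, r⟩ hp
    simp only [Finset.mem_coe, Finset.mem_product, Finset.mem_range, Finset.mem_filter, Finset.mem_Icc] at hp
    obtain ⟨hq, ⟨hr1, hr2⟩, hr3⟩ := hp
    simp only [Finset.mem_coe, Finset.mem_filter, Finset.mem_Icc]
    have hle : (q + 1) * d ≤ n := by
      rw [← hn]; exact Nat.mul_le_mul_right d (by omega)
    refine ⟨⟨by omega, by nlinarith⟩, ?_⟩
    rw [sq_cong d _ r (by omega) hr1 ?_]
    · exact hr3
    · have h2 : q * d + r = r + q * d := by omega
      rw [h2, Nat.add_mul_mod_self_right]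
  · intro k hk
    simp only [Finset.mem_coe, Finset.mem_filter, Finset.mem_Icc] at hk
    have hmod := Nat.div_add_mod' (k-1) d
    simp only
    omega
  · rintro ⟨q, r⟩ hp
    simp only [Finset.mem_coe, Finset.mem_product, Finset.mem_range, Finset.mem_filter, Finset.mem_Icc] at hp
    obtain ⟨hq, ⟨hr1, hr2⟩, -⟩ := hp
    have h1 : q * d + r - 1 = (r-1) + q * d := by omega
    have h2 : ((r-1) + q * d) / d = q := by
      rw [Nat.add_mul_div_right _ _ hd, Nat.div_eq_of_lt (by omega)]
      omega
    have h3 : ((r-1) + q * d) % d = r - 1 := by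
      rw [Nat.add_mul_mod_self_right, Nat.mod_eq_of_lt (by omega)]
    simp only [h1, h2, h3]
    congr 1
    omega

lemma zmod_iff (d k : ℕ) (hd : 0 < d) (hk : 1 ≤ k) [NeZero d] :
    d ∣ k^2 - 1 ↔ ((k : ZMod d))^2 = 1 := by
  rw [← Nsol_int_iff d k hk, ← ZMod.intCast_zmod_eq_zero_iff_dvd]
  push_cast
  rw [sub_eq_zero]

lemma Nsol_eq_card_zmod (d : ℕ) (hd : 0 < d) [NeZero d] :
    Nsol d = (Finset.univ.filter (fun x : ZMod d => x^2 = 1)).card := by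
  have hjx : ∀ x : ZMod d, (((if x.val = 0 then d else x.val : ℕ)) : ZMod d) = x := by
    intro x
    split_ifs with h0
    · rw [ZMod.natCast_self]
      exact ((ZMod.val_eq_zero x).mp h0).symm
    · exact ZMod.natCast_rightInverse x
  rw [Nsol]
  refine Finset.card_nbij' (fun k => (k : ZMod d))
    (fun x => if x.val = 0 then d else x.val) ?_ ?_ ?_ ?_
  · intro k hk
    beta_reduce
    simp only [Finset.mem_coe, Finset.mem_filter, Finset.mem_Icc] at hk
    simp only [Finset.mem_coe, Finset.mem_filter, Finset.mem_univ, true_and]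
    exact (zmod_iff d k hd hk.1.1).mp hk.2
  · intro x hx
    beta_reduce
    simp only [Finset.mem_coe, Finset.mem_filter, Finset.mem_univ, true_and] at hx
    have hvlt : x.val < d := ZMod.val_lt x
    simp only [Finset.mem_coe, Finset.mem_filter, Finset.mem_Icc]
    constructor
    · constructor <;> [split_ifs with h0; split_ifs with h0] <;> omega
    · rw [zmod_iff d _ hd (by split_ifs with h0 <;> omega), hjx]
      exact hx
  · intro k hk
    beta_reduce
    simp only [Finset.mem_coe, Finset.mem_filter, Finset.mem_Icc] at hk
    obtain ⟨⟨hk1, hk2⟩, -⟩ := hk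
    rcases Nat.lt_or_ge k d with h | h
    · rw [ZMod.val_cast_of_lt h]
      simp only [if_neg (by omega : ¬ k = 0)]
    · have hkd : k = d := by omega
      subst hkd
      rw [ZMod.natCast_self, ZMod.val_zero]
      simp
  · intro x hx
    beta_reduce
    exact hjx x

lemma Nsol_mul (a b : ℕ) (ha : 0 < a) (hb : 0 < b) (h : Nat.Coprime a b) :
    Nsol (a * b) = Nsol a * Nsol b := by
  haveI : NeZero a := ⟨ha.ne'⟩
  haveI : NeZero b := ⟨hb.ne'⟩
  haveI : NeZero (a*b) := ⟨by positivity⟩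
  rw [Nsol_eq_card_zmod a ha, Nsol_eq_card_zmod b hb,
    Nsol_eq_card_zmod (a*b) (by positivity)]
  let e := ZMod.chineseRemainder h
  have step1 : (Finset.univ.filter (fun x : ZMod (a*b) => x^2 = 1)).card =
      (Finset.univ.filter (fun y : ZMod a × ZMod b => y^2 = 1)).card := by
    refine Finset.card_nbij' (fun x => e x) (fun y => e.symm y) ?_ ?_ ?_ ?_
    · intro x hx
      beta_reduce
      simp only [Finset.mem_coe, Finset.mem_filter, Finset.mem_univ, true_and] at hx ⊢
      rw [← map_pow, hx, map_one]
    · intro y hy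
      beta_reduce
      simp only [Finset.mem_coe, Finset.mem_filter, Finset.mem_univ, true_and] at hy ⊢
      rw [← map_pow, hy, map_one]
    · intro x _; exact e.symm_apply_apply x
    · intro y _; exact e.apply_symm_apply y
  rw [step1]
  have step2 : (Finset.univ.filter (fun y : ZMod a × ZMod b => y^2 = 1)) =
      (Finset.univ.filter (fun x : ZMod a => x^2 = 1)) ×ˢ
      (Finset.univ.filter (fun x : ZMod b => x^2 = 1)) := by
    rw [← Finset.filter_product]
    rw [Finset.univ_product_univ]
    apply Finset.filter_congr
    intro y _
    simp [Prod.ext_iff, Prod.pow_fst, Prod.pow_snd]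
  rw [step2, Finset.card_product]

lemma sq_sub_one_fact (k : ℕ) (hk : 1 ≤ k) : k^2 - 1 = (k-1)*(k+1) := by
  obtain ⟨j, rfl⟩ : ∃ j, k = j + 1 := ⟨k - 1, by omega⟩
  simp only [Nat.add_sub_cancel]
  have : (j+1)^2 = j*(j+1+1)+1 := by ring
  omega

lemma Nsol_odd_prime_pow (p a : ℕ) (hp : p.Prime) (hodd : Odd p) (ha : 1 ≤ a) :
    Nsol (p ^ a) = 2 := by
  set q := p ^ a with hq
  have hp3 : 3 ≤ p := by
    have h2 := hp.two_le
    have hne : p ≠ 2 := by rintro rfl; rw [Nat.odd_iff] at hodd; omega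
    omega
  have hq3 : 3 ≤ q := le_trans hp3 (Nat.le_self_pow (by omega) p)
  have hset : (Icc 1 q).filter (fun k => q ∣ k^2 - 1) = {1, q - 1} := by
    ext k
    simp only [Finset.mem_filter, Finset.mem_Icc, Finset.mem_insert, Finset.mem_singleton]
    constructor
    · rintro ⟨⟨hk1, hk2⟩, hk3⟩
      rw [sq_sub_one_fact k hk1] at hk3
      have hcases : ¬ p ∣ (k-1) ∨ ¬ p ∣ (k+1) := by
        by_contra h
        push_neg at h
        have : p ∣ (k+1) - (k-1) := Nat.dvd_sub h.2 h.1
        have h2 : (k+1) - (k-1) = 2 := by omega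
        rw [h2] at this
        have := Nat.le_of_dvd (by omega) this
        omega
      rcases hcases with h | h
      · -- p ∤ k-1, so q ∣ k+1
        right
        have cop : Nat.Coprime q (k-1) :=
          Nat.Coprime.pow_left a ((Nat.Prime.coprime_iff_not_dvd hp).mpr h)
        have hdvd : q ∣ k + 1 := cop.dvd_of_dvd_mul_left hk3
        obtain ⟨c, hc⟩ := hdvd
        have hc1 : c = 1 := by
          rcases Nat.lt_or_ge c 2 with h' | h'
          · interval_cases c <;> omega
          · have : q * 2 ≤ q * c := Nat.mul_le_mul_left q h'
            omega
        subst hc1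
        simp only [Nat.mul_one] at hc
        omega
      · -- p ∤ k+1, so q ∣ k-1
        left
        have cop : Nat.Coprime q (k+1) :=
          Nat.Coprime.pow_left a ((Nat.Prime.coprime_iff_not_dvd hp).mpr h)
        have hdvd : q ∣ k - 1 := cop.dvd_of_dvd_mul_right hk3
        have : k - 1 = 0 := by
          by_contra h0
          have := Nat.le_of_dvd (by omega) hdvd
          omega
        omega
    · rintro (rfl | rfl)
      · exact ⟨⟨le_refl 1, by omega⟩, by simp⟩
      · refine ⟨⟨by omega, by omega⟩, ?_⟩
        rw [sq_sub_one_fact _ (by omega : 1 ≤ q - 1)]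
        have h2 : q - 1 + 1 = q := by omega
        rw [h2]
        exact Dvd.intro_left _ rfl
  rw [Nsol, hset]
  rw [Finset.card_insert_of_notMem (by simp; omega), Finset.card_singleton]

lemma Nsol_two_pow (a : ℕ) (ha : 3 ≤ a) : Nsol (2 ^ a) = 4 := by
  set q := 2 ^ a with hqdef
  set h := 2 ^ (a-1) with hhdef
  set g := 2 ^ (a-2) with hgdef
  have hh : h = 2 * g := by
    rw [hhdef, hgdef, ← pow_succ']
    congr 1
    omega
  have hq : q = 4 * g := by
    rw [hqdef, hgdef, show (4:ℕ) = 2^2 from rfl, ← pow_add]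
    congr 1
    omega
  have hg : 2 ≤ g := by
    rw [hgdef]
    calc 2 = 2^1 := rfl
    _ ≤ 2^(a-2) := Nat.pow_le_pow_right (by omega) (by omega)
  have hset : (Icc 1 q).filter (fun k => q ∣ k^2 - 1) = {1, h - 1, h + 1, q - 1} := by
    ext k
    simp only [Finset.mem_filter, Finset.mem_Icc, Finset.mem_insert, Finset.mem_singleton]
    constructor
    · rintro ⟨⟨hk1, hk2⟩, hk3⟩
      rw [sq_sub_one_fact k hk1] at hk3
      -- k is odd
      have hkodd : k % 2 = 1 := by
        rcases Nat.even_or_odd k with he | ho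
        · exfalso
          obtain ⟨c, hc⟩ := he
          have h2 : 2 ∣ (k-1)*(k+1) := dvd_trans (by rw [hq]; exact ⟨2*g, by ring⟩) hk3
          rcases (Nat.Prime.dvd_mul Nat.prime_two).mp h2 with h' | h' <;>
            · obtain ⟨e, he'⟩ := h'; omega
        · rw [Nat.odd_iff] at ho; exact ho
      rcases Nat.lt_or_ge (k % 4) 2 with hm4 | hm4
      · -- k % 4 = 1 : h ∣ k - 1
        have hk4 : k % 4 = 1 := by omega
        set u := (k+1)/2 with hu
        have hu2 : k + 1 = 2 * u := by omega
        have huodd : u % 2 = 1 := by omega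
        have hdvd2 : 2 * h ∣ 2 * ((k-1) * u) := by
          rw [show 2 * ((k-1)*u) = (k-1)*(2*u) by ring, ← hu2]
          have h2q : 2 * h = q := by omega
          rw [h2q]
          exact hk3
        have hdvd : h ∣ (k-1) * u := (mul_dvd_mul_iff_left (by norm_num : (2:ℕ) ≠ 0)).mp hdvd2
        have cop : Nat.Coprime h u := by
          rw [hhdef]
          exact Nat.Coprime.pow_left _ (Nat.coprime_two_left.mpr (Nat.odd_iff.mpr huodd))
        have hdvd' : h ∣ k - 1 := (Nat.Coprime.dvd_of_dvd_mul_right cop hdvd)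
        obtain ⟨c, hc⟩ := hdvd'
        have hc2 : c ≤ 1 := by
          by_contra hc2
          have : h * 2 ≤ h * c := Nat.mul_le_mul_left h (by omega)
          omega
        interval_cases c
        · left; omega
        · right; right; left; omega
      · -- k % 4 = 3 : h ∣ k + 1
        have hk4 : k % 4 = 3 := by omega
        set u := (k-1)/2 with hu
        have hu2 : k - 1 = 2 * u := by omega
        have huodd : u % 2 = 1 := by omega
        have hdvd2 : 2 * h ∣ 2 * (u * (k+1)) := by
          rw [show 2 * (u*(k+1)) = (2*u)*(k+1) by ring, ← hu2]
          have h2q : 2 * h = q := by omega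
          rw [h2q]
          exact hk3
        have hdvd : h ∣ u * (k+1) := (mul_dvd_mul_iff_left (by norm_num : (2:ℕ) ≠ 0)).mp hdvd2
        have cop : Nat.Coprime h u := by
          rw [hhdef]
          exact Nat.Coprime.pow_left _ (Nat.coprime_two_left.mpr (Nat.odd_iff.mpr huodd))
        have hdvd' : h ∣ k + 1 := (Nat.Coprime.dvd_of_dvd_mul_left cop hdvd)
        obtain ⟨c, hc⟩ := hdvd'
        have hc2 : c ≤ 2 := by
          by_contra hc2
          have : h * 3 ≤ h * c := Nat.mul_le_mul_left h (by omega)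
          omega
        interval_cases c
        · omega
        · right; left; omega
        · right; right; right; omega
    · intro hmem
      have hfact : ∀ x y : ℕ, k - 1 = x → k + 1 = y → q ∣ x * y → (1 ≤ k ∧ k ≤ q) → q ∣ k^2 - 1 := by
        intro x y hx hy hdvd hk
        rw [sq_sub_one_fact k hk.1, hx, hy]
        exact hdvd
      rcases hmem with rfl | rfl | rfl | rfl
      · exact ⟨⟨le_refl 1, by omega⟩, by simp⟩
      · refine ⟨⟨by omega, by omega⟩, ?_⟩
        rw [sq_sub_one_fact _ (by omega : 1 ≤ h - 1)]
        refine ⟨g - 1, ?_⟩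
        have e1 : h - 1 - 1 = 2*(g-1) := by omega
        have e2 : h - 1 + 1 = 2*g := by omega
        rw [e1, e2]
        have e3 : 2*(g-1)*(2*g) = 4*g*(g-1) := by ring
        rw [e3, ← hq]
      · refine ⟨⟨by omega, by omega⟩, ?_⟩
        rw [sq_sub_one_fact _ (by omega : 1 ≤ h + 1)]
        refine ⟨g + 1, ?_⟩
        have e1 : h + 1 - 1 = 2*g := by omega
        have e2 : h + 1 + 1 = 2*g + 2 := by omega
        rw [e1, e2]
        have e3 : 2*g*(2*g+2) = 4*g*(g+1) := by ring
        rw [e3, ← hq]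
      · refine ⟨⟨by omega, by omega⟩, ?_⟩
        rw [sq_sub_one_fact _ (by omega : 1 ≤ q - 1)]
        refine ⟨q - 2, ?_⟩
        have e1 : q - 1 + 1 = q := by omega
        rw [e1]
        have e2 : (q-1-1) = q - 2 := by omega
        rw [e2, Nat.mul_comm]
  rw [Nsol, hset]
  have d1 : (1:ℕ) ≠ h - 1 := by omega
  have d2 : (1:ℕ) ≠ h + 1 := by omega
  have d3 : (1:ℕ) ≠ q - 1 := by omega
  have d4 : h - 1 ≠ h + 1 := by omega
  have d5 : h - 1 ≠ q - 1 := by omega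
  have d6 : h + 1 ≠ q - 1 := by omega
  rw [Finset.card_insert_of_notMem (by simp [d1, d2, d3]; omega),
      Finset.card_insert_of_notMem (by simp [d4, d5]),
      Finset.card_insert_of_notMem (by simp [d6]),
      Finset.card_singleton]

def NA : ArithmeticFunction ℕ := ⟨Nsol, rfl⟩

lemma NA_mult : NA.IsMultiplicative := by
  constructor
  · exact Nsol_one
  · intro m n h
    rcases Nat.eq_zero_or_pos m with hm | hm
    · subst hm
      simp [Nat.coprime_zero_left] at h
      simp [h, NA, Nsol_one]
      exact (by decide : Nsol 0 = Nsol 0 * Nsol 1)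
    rcases Nat.eq_zero_or_pos n with hn | hn
    · subst hn
      simp [Nat.coprime_zero_right] at h
      simp [h, NA, Nsol_one]
      exact (by decide : Nsol 0 = Nsol 1 * Nsol 0)
    exact Nsol_mul m n hm hn h

noncomputable def FA : ArithmeticFunction ℤ := moebius * (NA : ArithmeticFunction ℤ)

lemma FA_mult : FA.IsMultiplicative :=
  isMultiplicative_moebius.mul NA_mult.natCast

lemma FA_apply (n : ℕ) : FA n = ∑ d ∈ n.divisors, (μ (n / d) : ℤ) * Nsol d := by
  rw [FA, mul_apply, ← Nat.sum_divisorsAntidiagonal' (f := fun a b => (μ a : ℤ) * Nsol b)]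
  rfl

lemma FA_prime_pow (p a : ℕ) (hp : p.Prime) (ha : 1 ≤ a) :
    FA (p ^ a) = (Nsol (p ^ a) : ℤ) - Nsol (p ^ (a - 1)) := by
  rw [FA_apply, Nat.sum_divisors_prime_pow hp]
  obtain ⟨b, rfl⟩ : ∃ b, a = b + 1 := ⟨a - 1, by omega⟩
  rw [Finset.sum_range_succ]
  have h1 : ∀ i ∈ Finset.range (b + 1), p ^ (b + 1) / p ^ i = p ^ (b + 1 - i) := fun i hi =>
    Nat.pow_div (by simp at hi; omega) hp.pos
  rw [Finset.sum_congr rfl (fun i hi => by rw [h1 i hi])]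
  rcases Nat.eq_zero_or_pos b with hb | hb
  · subst hb
    simp [moebius_apply_prime hp, Nat.div_self ((Nat.pow_pos hp.pos : 0 < p ^ 1)), Nat.div_self hp.pos, moebius_apply_one]
    ring
  obtain ⟨c, rfl⟩ : ∃ c, b = c + 1 := ⟨b - 1, by omega⟩
  rw [Finset.sum_range_succ]
  have hz : ∀ i ∈ Finset.range (c + 1), (μ (p ^ (c + 2 - i)) : ℤ) * Nsol (p ^ i) = 0 := by
    intro i hi
    simp only [Finset.mem_range] at hi
    have : ¬ Squarefree (p ^ (c + 2 - i)) := by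
      intro hs
      exact hp.prime.not_unit (hs p (by
        have : p * p = p ^ 2 := by ring
        rw [this]
        exact pow_dvd_pow p (by omega)))
    rw [moebius_eq_zero_of_not_squarefree this]
    ring
  rw [Finset.sum_eq_zero hz]
  simp [moebius_apply_prime hp, Nat.div_self (Nat.pow_pos hp.pos), Nat.div_self hp.pos, moebius_apply_one]
  ring

lemma odd_prime_of_dvd {p m : ℕ} (hp : p.Prime) (hm : Odd m) (hdvd : p ∣ m) : Odd p := by
  rcases hp.eq_two_or_odd' with rfl | h
  · exfalso
    rw [Nat.odd_iff] at hm
    obtain ⟨c, rfl⟩ := hdvd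
    omega
  · exact h

lemma FA_odd_prime (p : ℕ) (hp : p.Prime) (hodd : Odd p) : FA p = 1 := by
  have h := FA_prime_pow p 1 hp le_rfl
  have h2 : Nsol p = 2 := by
    have := Nsol_odd_prime_pow p 1 hp hodd le_rfl
    rwa [pow_one] at this
  rw [pow_one] at h
  rw [h, h2]
  norm_num [Nsol_one]

lemma FA_odd_squarefree (m : ℕ) (hm : Odd m) (hsf : Squarefree m) : FA m = 1 := by
  conv_lhs => rw [← Nat.prod_primeFactors_of_squarefree hsf]
  rw [FA_mult.map_prod _ m.primeFactors (fun p hp q hq hne =>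
    (Nat.coprime_primes (Nat.prime_of_mem_primeFactors hp)
      (Nat.prime_of_mem_primeFactors hq)).mpr hne)]
  apply Finset.prod_eq_one
  intro p hp
  have hpp := Nat.prime_of_mem_primeFactors hp
  have hpodd := odd_prime_of_dvd hpp hm (Nat.dvd_of_mem_primeFactors hp)
  exact FA_odd_prime p hpp hpodd

lemma FA_odd_not_squarefree (m : ℕ) (hm : Odd m) (h0 : m ≠ 0) (hsf : ¬ Squarefree m) :
    FA m = 0 := by
  rw [ArithmeticFunction.IsMultiplicative.multiplicative_factorization FA FA_mult h0]
  rw [Nat.squarefree_iff_prime_squarefree] at hsf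
  push_neg at hsf
  obtain ⟨p, hp, hpdvd⟩ := hsf
  have hmem : p ∈ m.factorization.support := by
    rw [Nat.support_factorization, Nat.mem_primeFactors]
    exact ⟨hp, dvd_trans (Dvd.intro p rfl) hpdvd, h0⟩
  apply Finset.prod_eq_zero hmem
  beta_reduce
  have ha2 : 2 ≤ m.factorization p := by
    rw [← Nat.Prime.pow_dvd_iff_le_factorization hp h0]
    rw [show p^2 = p * p by ring]
    exact hpdvd
  have hpodd := odd_prime_of_dvd hp hm (dvd_trans (Dvd.intro p rfl) hpdvd)
  rw [FA_prime_pow p _ hp (by omega),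
    Nsol_odd_prime_pow p _ hp hpodd (by omega),
    Nsol_odd_prime_pow p _ hp hpodd (by omega)]
  ring

lemma gcd_divisors (a : ℤ) (n : ℕ) (hn : n ≠ 0) :
    (Int.gcd a n).divisors = n.divisors.filter (fun d : ℕ => (d:ℤ) ∣ a) := by
  ext d
  simp only [Nat.mem_divisors, Finset.mem_filter]
  constructor
  · rintro ⟨hd, -⟩
    have h1 : (d:ℤ) ∣ Int.gcd a n := Int.natCast_dvd_natCast.mpr hd
    exact ⟨⟨Int.natCast_dvd_natCast.mp (h1.trans (Int.gcd_dvd_right _ _)), hn⟩,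
      h1.trans (Int.gcd_dvd_left _ _)⟩
  · rintro ⟨⟨hd, -⟩, ha⟩
    refine ⟨Int.natCast_dvd_natCast.mp (Int.dvd_coe_gcd ha (Int.natCast_dvd_natCast.mpr hd)), ?_⟩
    simp [Int.gcd_eq_zero_iff, hn]

lemma main_sum (n : ℕ) (hn : 0 < n) :
    ∑ k ∈ Icc 1 n, ramanujanSum n ((k : ℤ) ^ 2 - 1) = n * FA n := by
  have h1 : ∀ k ∈ Icc 1 n, ramanujanSum n ((k : ℤ) ^ 2 - 1) =
      ∑ d ∈ n.divisors, if d ∣ k^2 - 1 then (d : ℤ) * μ (n / d) else 0 := by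
    intro k hk
    simp only [Finset.mem_Icc] at hk
    rw [ramanujanSum, gcd_divisors _ n hn.ne', Finset.sum_filter]
    exact Finset.sum_congr rfl fun d _ => if_congr (Nsol_int_iff d k hk.1) rfl rfl
  rw [Finset.sum_congr rfl h1, Finset.sum_comm]
  have h2 : ∀ d ∈ n.divisors,
      (∑ k ∈ Icc 1 n, if d ∣ k^2 - 1 then (d : ℤ) * μ (n / d) else 0) =
      ((n / d) * Nsol d : ℕ) * ((d : ℤ) * μ (n / d)) := by
    intro d hd
    rw [Nat.mem_divisors] at hd
    have hdpos : 0 < d := Nat.pos_of_dvd_of_pos hd.1 hn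
    rw [← Finset.sum_filter, Finset.sum_const, count_interval n d hdpos hd.1,
      nsmul_eq_mul]
  rw [Finset.sum_congr rfl h2, FA_apply, Finset.mul_sum]
  apply Finset.sum_congr rfl
  intro d hd
  rw [Nat.mem_divisors] at hd
  have key : ((n / d : ℕ) : ℤ) * (d:ℤ) = (n:ℤ) := by
    exact_mod_cast congrArg (Nat.cast : ℕ → ℤ) (Nat.div_mul_cancel hd.1)
  rw [Nat.cast_mul]
  linear_combination ((μ (n/d) : ℤ) * (Nsol d : ℤ)) * key

lemma FA_two_pow (j : ℕ) :
    FA (2 ^ j) = if j = 0 ∨ j = 2 then 1 else if j = 3 then 2 else 0 := by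
  match j with
  | 0 => simpa using FA_mult.map_one
  | 1 =>
    rw [FA_prime_pow 2 1 Nat.prime_two le_rfl]
    norm_num
    rw [show Nsol 2 = 1 by decide, show Nsol 1 = 1 by decide]
    ring
  | 2 =>
    rw [FA_prime_pow 2 2 Nat.prime_two (by omega)]
    norm_num
    rw [show Nsol 4 = 2 by decide, show Nsol 2 = 1 by decide]
    ring
  | 3 =>
    rw [FA_prime_pow 2 3 Nat.prime_two (by omega)]
    norm_num
    rw [show Nsol 8 = 4 by decide, show Nsol 4 = 2 by decide]
    ring
  | (j+4) =>
    rw [FA_prime_pow 2 (j+4) Nat.prime_two (by omega)]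
    have e1 : j + 4 - 1 = j + 3 := by omega
    rw [e1, Nsol_two_pow (j+4) (by omega), Nsol_two_pow (j+3) (by omega)]
    norm_num
    omega

theorem eval_E_quadratic (n : ℕ) (hn : 0 < n) (j m : ℕ) (hm : Odd m)
    (hnjm : n = 2 ^ j * m) :
    (1 / (n : ℚ)) * ∑ k ∈ Icc 1 n, (ramanujanSum n ((k : ℤ) ^ 2 - 1) : ℚ) =
    if (j = 0 ∨ j = 2) ∧ Squarefree m then 1
    else if j = 3 ∧ Squarefree m then 2
    else 0 := by
  have hm0 : m ≠ 0 := by rintro rfl; rw [Nat.odd_iff] at hm; omega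
  have hcop : Nat.Coprime (2^j) m := Nat.Coprime.pow_left j (Nat.coprime_two_left.mpr hm)
  have hn' : (n : ℚ) ≠ 0 := Nat.cast_ne_zero.mpr hn.ne'
  have h1 : ∑ k ∈ Icc 1 n, (ramanujanSum n ((k : ℤ) ^ 2 - 1) : ℚ) =
      (((∑ k ∈ Icc 1 n, ramanujanSum n ((k : ℤ) ^ 2 - 1)) : ℤ) : ℚ) := by
    push_cast
    rfl
  rw [h1, main_sum n hn]
  have h2 : (1 / (n : ℚ)) * (((n : ℤ) * FA n : ℤ) : ℚ) = ((FA n : ℤ) : ℚ) := by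
    push_cast
    field_simp
  rw [h2]
  have hFA : FA n = FA (2^j) * FA m := by
    rw [hnjm]
    exact (FA_mult.map_mul_of_coprime hcop)
  by_cases hsf : Squarefree m
  · rw [hFA, FA_odd_squarefree m hm hsf, mul_one, FA_two_pow]
    simp only [hsf, and_true]
    split_ifs <;> norm_num
  · rw [hFA, FA_odd_not_squarefree m hm hm0 hsf, mul_zero]
    simp only [hsf, and_false, if_false]
    norm_num
end
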